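/- For every natural number n, the coefficient of x^n in the formal power series (x/(1 − e^{−x}))^{n+1} · (1 + e^x)^{−1} ∈ ℚ[[x]] equals 2^{−n−1}. -/

import Mathlib

open PowerSeries Finset

lemma dM : d⁄dX ℚ (rescale (-1) (exp ℚ)) = - rescale (-1) (exp ℚ) := by
  ext n
  simp only [coeff_derivative, coeff_rescale, coeff_exp, map_neg, LinearMap.neg_apply, Algebra.algebraMap_self, RingHom.id_apply]
  rw [Nat.factorial_succ, pow_succ]
  have h : ((n:ℚ)+1) ≠ 0 := by positivity
  have h2 : ((n.factorial : ℚ)) ≠ 0 := by positivity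
  field_simp
  push_cast
  ring

lemma hEM : exp ℚ * rescale (-1) (exp ℚ) = 1 := exp_mul_exp_neg_eq_one

lemma constM : constantCoeff (rescale (-1) (exp ℚ)) = 1 := by
  rw [← coeff_zero_eq_constantCoeff_apply, coeff_rescale]
  simp [coeff_exp]

lemma constu (u : ℚ⟦X⟧) (hu : X * u = 1 - rescale (-1) (exp ℚ)) :
    constantCoeff u = 1 := by
  have h := congrArg (coeff 1) hu
  rw [coeff_succ_X_mul, map_sub, coeff_rescale] at h
  simp only [coeff_exp, coeff_one] at h
  norm_num at h
  exact h

-- key lemma: residue of (1-y)/y^(m+2) vanishes, in power series form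
lemma lemA (u v : ℚ⟦X⟧) (huv : u * v = 1)
    (hu : X * u = 1 - rescale (-1) (exp ℚ)) (m : ℕ) :
    coeff (m+1) (rescale (-1) (exp ℚ) * v^(m+2)) = 0 := by
  set M := rescale (-1) (exp ℚ) with hM
  have hdM : d⁄dX ℚ M = -M := by rw [hM]; exact dM
  -- M = u + X * d u
  have hMd : M = u + X * d⁄dX ℚ u := by
    have h := congrArg (d⁄dX ℚ) hu
    rw [Derivation.leibniz] at h
    simp only [smul_eq_mul, derivative_X, mul_one, map_sub, Derivation.map_one_eq_zero, hdM] at h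
    linear_combination -h
  -- u * Dv = - v * Du
  have hdv : u * d⁄dX ℚ v = -(v * d⁄dX ℚ u) := by
    have h := congrArg (d⁄dX ℚ) huv
    rw [Derivation.leibniz, Derivation.map_one_eq_zero] at h
    simp only [smul_eq_mul] at h
    linear_combination h
  -- derivative of g = u * v^(m+2)
  have hg : d⁄dX ℚ (u * v^(m+2)) = -((m:ℚ⟦X⟧)+1) * (d⁄dX ℚ u * v^(m+2)) := by
    rw [Derivation.leibniz, Derivation.leibniz_pow]
    simp only [smul_eq_mul, nsmul_eq_mul]
    push_cast
    linear_combination ((m:ℚ⟦X⟧)+2) * v^(m+1) * hdv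
  have hkey : coeff m (d⁄dX ℚ u * v^(m+2)) = - coeff (m+1) (u * v^(m+2)) := by
    have h1 : coeff m (d⁄dX ℚ (u * v^(m+2))) = coeff (m+1) (u * v^(m+2)) * (m+1) := coeff_derivative _ _
    rw [hg] at h1
    have h2 : -((m:ℚ⟦X⟧)+1) = C (-((m:ℚ)+1)) := by push_cast; simp
    rw [h2, coeff_C_mul] at h1
    have h3 : ((m:ℚ)+1) ≠ 0 := by positivity
    have h4 : ((m:ℚ)+1) * coeff m (d⁄dX ℚ u * v^(m+2))
        = ((m:ℚ)+1) * (- coeff (m+1) (u * v^(m+2))) := by linear_combination -h1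
    exact mul_left_cancel₀ h3 h4
  rw [hMd]
  have : (u + X * d⁄dX ℚ u) * v^(m+2) = u * v^(m+2) + X * (d⁄dX ℚ u * v^(m+2)) := by ring
  rw [this, map_add, coeff_succ_X_mul, hkey]
  ring

lemma lemC (u v : ℚ⟦X⟧) (huv : u * v = 1)
    (hu : X * u = 1 - rescale (-1) (exp ℚ)) (j : ℕ) :
    coeff j (rescale (-1) (exp ℚ) * v ^ (j+1)) = if j = 0 then 1 else 0 := by
  match j with
  | 0 =>
    have h := congrArg (constantCoeff) huv
    rw [map_mul, constu u hu, one_mul, map_one] at h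
    simp [coeff_zero_eq_constantCoeff_apply, constM, h]
  | (m+1) =>
    rw [if_neg (Nat.succ_ne_zero m)]
    exact lemA u v huv hu m

lemma geo (y : ℚ⟦X⟧) (n : ℕ) :
    (2 - y) * ∑ k ∈ range (n+1), C ((1/2)^(k+1)) * y^k
      = 1 - C ((1/2)^(n+1)) * y^(n+1) := by
  induction n with
  | zero =>
    have h2 : (2:ℚ⟦X⟧) * C (1/2) = 1 := by
      rw [show (2:ℚ⟦X⟧) = C 2 from (map_ofNat C 2).symm, ← map_mul]; norm_num
    simp only [zero_add, range_one, sum_singleton, pow_zero, mul_one, pow_one]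
    linear_combination h2
  | succ m ih =>
    rw [sum_range_succ, mul_add, ih]
    have h2 : (2:ℚ⟦X⟧) * C ((1/2)^(m+2)) = C ((1/2)^(m+1)) := by
      rw [show (2:ℚ⟦X⟧) = C 2 from (map_ofNat C 2).symm, ← map_mul]
      congr 1
      ring
    linear_combination y^(m+1) * h2

theorem stmt_9 (u : PowerSeries ℚ)
    (hu : PowerSeries.X * u = 1 - PowerSeries.rescale (-1) (PowerSeries.exp ℚ))
    (n : ℕ) :
    PowerSeries.coeff n ((u⁻¹) ^ (n+1) * (1 + PowerSeries.exp ℚ)⁻¹)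
      = 1 / 2 ^ (n+1) := by
  set M := rescale (-1) (exp ℚ) with hMdef
  set E := exp ℚ with hEdef
  set v := u⁻¹ with hvdef
  have huv : u * v = 1 := PowerSeries.mul_inv_cancel u (by rw [constu u hu]; norm_num)
  have hconstE : constantCoeff E = 1 := constantCoeff_exp
  have h1E : constantCoeff (1 + E) ≠ 0 := by
    rw [map_add, map_one, hconstE]; norm_num
  have h1M : constantCoeff ((1:ℚ⟦X⟧) + M) ≠ 0 := by
    rw [map_add, map_one, hMdef, constM]; norm_num
  have h1Ene : (1 + E) ≠ 0 := fun h => h1E (by rw [h, map_zero])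
  have h1Mne : ((1:ℚ⟦X⟧) + M) ≠ 0 := fun h => h1M (by rw [h, map_zero])
  have hEM' : E * M = 1 := hEM
  have hinv : (1 + E)⁻¹ = M * (1 + M)⁻¹ := by
    apply mul_left_cancel₀ h1Ene
    rw [PowerSeries.mul_inv_cancel _ h1E]
    have : (1 + E) * (M * (1 + M)⁻¹) = ((1:ℚ⟦X⟧) + M) * (1 + M)⁻¹ := by
      rw [show (1 + E) * (M * (1+M)⁻¹) = (M + E * M) * (1+M)⁻¹ by ring, hEM']
      ring_nf
    rw [this, PowerSeries.mul_inv_cancel _ h1M]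
  set y : ℚ⟦X⟧ := X * u with hydef
  have hy : (1:ℚ⟦X⟧) + M = 2 - y := by rw [hu]; ring
  set S : ℚ⟦X⟧ := ∑ k ∈ range (n+1), C ((1/2)^(k+1)) * y^k with hSdef
  have hgeo : ((1:ℚ⟦X⟧) + M) * S = 1 - C ((1/2)^(n+1)) * y^(n+1) := by
    rw [hy, hSdef]; exact geo y n
  have hSinv : ((1:ℚ⟦X⟧) + M)⁻¹ = S + C ((1/2)^(n+1)) * y^(n+1) * (1 + M)⁻¹ := by
    apply mul_left_cancel₀ h1Mne
    rw [PowerSeries.mul_inv_cancel _ h1M, mul_add, hgeo,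
        show ((1:ℚ⟦X⟧)+M) * (C ((1/2)^(n+1)) * y^(n+1) * (1+M)⁻¹)
          = C ((1/2)^(n+1)) * y^(n+1) * ((1+M) * (1+M)⁻¹) by ring,
        PowerSeries.mul_inv_cancel _ h1M]
    ring
  have hexpand : v^(n+1) * (1 + E)⁻¹
      = v^(n+1) * M * S + v^(n+1) * M * (C ((1/2)^(n+1)) * y^(n+1) * (1 + M)⁻¹) := by
    conv_lhs => rw [hinv, hSinv]
    ring
  rw [hexpand, map_add]
  have hpiece2 : coeff n (v^(n+1) * M * (C ((1/2)^(n+1)) * y^(n+1) * (1+M)⁻¹)) = 0 := by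
    have he : v^(n+1) * M * (C ((1/2)^(n+1)) * y^(n+1) * (1+M)⁻¹)
        = (M * (C ((1/2)^(n+1))) * (1+M)⁻¹ * (u*v)^(n+1)) * X^(n+1) := by
      rw [hydef]; ring
    rw [he, huv, one_pow, mul_one, coeff_mul_X_pow']
    rw [if_neg (by omega)]
  rw [hpiece2, add_zero, hSdef, mul_sum, map_sum]
  have hterm : ∀ k ∈ range (n+1),
      coeff n (v^(n+1) * M * (C ((1/2)^(k+1)) * y^k))
        = if k = n then (1/2:ℚ)^(n+1) else 0 := by
    intro k hk
    rw [mem_range] at hk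
    have hkn : k ≤ n := Nat.lt_succ_iff.mp hk
    have hsplit : v^(n+1) * M * (C ((1/2)^(k+1)) * y^k)
        = C ((1/2)^(k+1)) * ((M * v^(n-k+1)) * ((u*v)^k) * X^k) := by
      rw [hydef, show n + 1 = (n - k + 1) + k by omega]
      ring
    rw [hsplit, huv, one_pow, mul_one, coeff_C_mul, coeff_mul_X_pow' _ k n,
        if_pos hkn, hMdef, lemC u v huv hu (n-k)]
    rcases eq_or_ne k n with h | h
    · rw [if_pos (by omega), if_pos h, h]
      norm_num
    · rw [if_neg (by omega), if_neg h, mul_zero]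
  rw [Finset.sum_congr rfl hterm, Finset.sum_ite_eq' (range (n+1)) n, if_pos (self_mem_range_succ n)]
  rw [one_div, inv_pow, inv_eq_one_div]
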